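/- Let A be a hereditary graph property containing a graph which is neither a clique nor an edgeless graph. Then for every graph G, the polynomial P_A(G;x) = Σ_{S ⊆ V(G), G[S] ∈ A} x^{|S|} is real-rooted if and only if G ∈ A. -/

import Mathlib

open Polynomial

lemma ms_esymm_map {R S : Type*} [CommSemiring R] [CommSemiring S] (f : R →+* S)
    (s : Multiset R) (k : ℕ) : (s.map f).esymm k = f (s.esymm k) := by
  rw [Multiset.esymm, Multiset.esymm, Multiset.powersetCard_map, Multiset.map_map,
    map_multiset_sum, Multiset.map_map]
  refine congrArg _ (Multiset.map_congr rfl fun t _ => ?_)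
  simp [Multiset.prod_hom]

lemma ms_esymm_one {R : Type*} [CommSemiring R] (s : Multiset R) : s.esymm 1 = s.sum := by
  rw [Multiset.esymm, Multiset.powersetCard_one, Multiset.map_map]
  simp

lemma ms_esymm_two_cons {R : Type*} [CommRing R] (a : R) (s : Multiset R) :
    (a ::ₘ s).esymm 2 = a * s.sum + s.esymm 2 := by
  rw [Multiset.esymm, show (2:ℕ) = 1 + 1 from rfl, Multiset.powersetCard_cons,
    Multiset.map_add, Multiset.sum_add, Multiset.map_map, Multiset.powersetCard_one,
    Multiset.map_map]
  rw [add_comm]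
  congr 1
  have : ((Multiset.prod ∘ Multiset.cons a) ∘ singleton) = fun x : R => a * x := by
    funext x; simp
  rw [this]
  have := Multiset.sum_map_mul_left (a := a) (f := fun x : R => x) (s := s)
  simpa using this

lemma ms_sq_sum (s : Multiset ℝ) : s.sum ^ 2 = (s.map (fun x => x ^ 2)).sum + 2 * s.esymm 2 := by
  induction s using Multiset.induction_on with
  | empty => simp [Multiset.esymm, Multiset.powersetCard_zero_right]
  | cons a s ih =>
    rw [Multiset.sum_cons, Multiset.map_cons, Multiset.sum_cons, ms_esymm_two_cons]
    ring_nf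
    nlinarith [ih]

lemma ms_cauchy (s : Multiset ℝ) :
    s.sum ^ 2 ≤ (Multiset.card s : ℝ) * (s.map (fun x => x ^ 2)).sum := by
  induction s using Multiset.induction_on with
  | empty => simp
  | cons a s ih =>
    have hT : 0 ≤ (s.map (fun x => x ^ 2)).sum :=
      Multiset.sum_nonneg (by intro x hx; obtain ⟨y, _, rfl⟩ := Multiset.mem_map.mp hx; positivity)
    rcases Nat.eq_zero_or_pos (Multiset.card s) with h0 | h1
    · rw [Multiset.card_eq_zero] at h0
      subst h0; simp
    · have hc1 : (1:ℝ) ≤ (Multiset.card s : ℝ) := by exact_mod_cast h1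
      rw [Multiset.sum_cons, Multiset.map_cons, Multiset.sum_cons, Multiset.card_cons]
      push_cast
      nlinarith [sq_nonneg ((Multiset.card s : ℝ) * a - s.sum), ih, hT, hc1,
        mul_nonneg (by linarith : (0:ℝ) ≤ (Multiset.card s : ℝ) + 1)
          (by linarith [ih] : 0 ≤ (Multiset.card s : ℝ) * (s.map (fun x => x ^ 2)).sum - s.sum ^ 2)]

/-- Let `A` be a hereditary graph property (containing the empty
graph) which contains a graph that is neither a clique nor an edgeless graph.
Then for every graph `G`, the polynomial `P_A(G;x) = Σ_{S, G[S] ∈ A} x^{|S|}` is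
real-rooted iff `G ∈ A`. -/
theorem stmt_15 {V β : Type} [Fintype V] (G : SimpleGraph V)
    (A : ∀ ⦃α : Type⦄, SimpleGraph α → Prop)
    (hA : ∀ ⦃α β : Type⦄ (H : SimpleGraph α) (H' : SimpleGraph β),
      Nonempty (H ↪g H') → A H' → A H)
    (hEmpty : A (⊥ : SimpleGraph Empty))
    (H0 : SimpleGraph β) (hH0 : A H0)
    (hnc : ¬ ∀ u v : β, u ≠ v → H0.Adj u v)
    (hne : ¬ ∀ u v : β, ¬ H0.Adj u v)
    [∀ S : Finset V, Decidable (A (G.induce (S : Set V)))]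
    (P : Polynomial ℝ)
    (hP : P = ∑ S ∈ Finset.univ.filter (fun S : Finset V => A (G.induce (S : Set V))),
      Polynomial.X ^ S.card) :
    (∀ z : ℂ, Polynomial.aeval z P = 0 → z.im = 0) ↔ A G := by
  classical
  obtain ⟨u, v, huv⟩ : ∃ u v : β, H0.Adj u v := by push_neg at hne; exact hne
  obtain ⟨p, q, hpq, hnadj⟩ : ∃ p q : β, p ≠ q ∧ ¬ H0.Adj p q := by push_neg at hnc; exact hnc
  -- every graph on at most two vertices is in A
  have keysmall : ∀ (α : Type) [Fintype α] (G' : SimpleGraph α), Fintype.card α ≤ 2 → A G' := by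
    intro α instα G' hcard
    rcases Nat.lt_or_ge (Fintype.card α) 2 with h | h
    · have hss : Subsingleton α := Fintype.card_le_one_iff_subsingleton.mp (by omega)
      refine hA _ _ ⟨⟨⟨fun _ => u, fun a b _ => Subsingleton.elim a b⟩, ?_⟩⟩ hH0
      intro a b
      exact iff_of_false H0.irrefl (by rw [Subsingleton.elim a b]; exact G'.irrefl)
    · have h2 : Fintype.card α = 2 := le_antisymm hcard h
      have hcard2 : Nat.card α = 2 := by rw [Nat.card_eq_fintype_card]; exact h2
      obtain ⟨x, y, hxy, hcov⟩ := Nat.card_eq_two_iff.mp hcard2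
      have hz : ∀ z : α, z = x ∨ z = y := fun z => by
        have : z ∈ ({x, y} : Set α) := hcov ▸ Set.mem_univ z
        simpa using this
      have hyx : y ≠ x := hxy.symm
      by_cases hadj : G'.Adj x y
      · refine hA _ _ ⟨⟨⟨fun z => if z = x then u else v, ?_⟩, ?_⟩⟩ hH0
        · intro z w hzw
          rcases hz z with rfl | rfl <;> rcases hz w with rfl | rfl
          · rfl
          · exact absurd (by simpa [hyx] using hzw) huv.ne
          · exact absurd (by simpa [hyx] using hzw) huv.ne'
          · rfl
        · intro z w
          change H0.Adj (if z = x then u else v) (if w = x then u else v) ↔ G'.Adj z w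
          rcases hz z with rfl | rfl <;> rcases hz w with rfl | rfl <;>
            simp [hyx, huv, huv.symm, hadj, hadj.symm]
      · have hadj' : ¬ G'.Adj y x := fun h' => hadj h'.symm
        refine hA _ _ ⟨⟨⟨fun z => if z = x then p else q, ?_⟩, ?_⟩⟩ hH0
        · intro z w hzw
          rcases hz z with rfl | rfl <;> rcases hz w with rfl | rfl
          · rfl
          · exact absurd (by simpa [hyx] using hzw) hpq
          · exact absurd (by simpa [hyx] using hzw) hpq.symm
          · rfl
        · have hnadj' : ¬ H0.Adj q p := fun h' => hnadj h'.symm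
          intro z w
          change H0.Adj (if z = x then p else q) (if w = x then p else q) ↔ G'.Adj z w
          rcases hz z with rfl | rfl <;> rcases hz w with rfl | rfl <;>
            simp [hyx, hnadj, hnadj', hadj, hadj']
  set n := Fintype.card V with hn
  set F := Finset.univ.filter (fun S : Finset V => A (G.induce (S : Set V))) with hF
  have hsmall : ∀ S : Finset V, S.card ≤ 2 → S ∈ F := by
    intro S hS
    rw [hF, Finset.mem_filter]
    refine ⟨Finset.mem_univ _, keysmall _ _ ?_⟩
    simpa using hS
  have hcoeff : ∀ k, P.coeff k = ((F.filter fun S => S.card = k).card : ℝ) := by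
    intro k
    rw [hP, finset_sum_coeff]
    simp_rw [coeff_X_pow]
    have he : ∀ S ∈ F, (if k = S.card then (1:ℝ) else 0) = if S.card = k then 1 else 0 := by
      intro S _; simp only [eq_comm]
    rw [Finset.sum_congr rfl he, Finset.sum_boole]
  have hck : ∀ k : ℕ, k ≤ 2 → P.coeff k = (n.choose k : ℝ) := by
    intro k hk
    rw [hcoeff k]
    have h1 : F.filter (fun S => S.card = k)
        = Finset.univ.filter (fun S : Finset V => S.card = k) := by
      ext S
      simp only [hF, Finset.mem_filter, Finset.mem_univ, true_and]
      exact ⟨fun h => h.2, fun h => ⟨(Finset.mem_filter.mp (hsmall S (h ▸ hk))).2, h⟩⟩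
    rw [h1, ← Finset.powerset_univ, ← Finset.powersetCard_eq_filter,
      Finset.card_powersetCard, Finset.card_univ]
  constructor
  · -- real-rooted → A G
    intro hroot
    by_contra hGA
    have hn3 : 3 ≤ n := by
      by_contra hn3
      exact hGA (keysmall V G (by omega))
    have hc0 : P.coeff 0 = 1 := by rw [hck 0 (by norm_num)]; simp
    have hc1 : P.coeff 1 = (n : ℝ) := by rw [hck 1 (by norm_num)]; simp
    have hc2 : P.coeff 2 = (n.choose 2 : ℝ) := hck 2 le_rfl
    have hup : Finset.univ ∉ F := by
      intro hu
      refine hGA (hA _ _ ⟨?_⟩ ((Finset.mem_filter.mp hu).2))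
      rw [show ((Finset.univ : Finset V) : Set V) = Set.univ from Finset.coe_univ]
      exact (SimpleGraph.induceUnivIso G).symm.toEmbedding
    have hdeg : P.natDegree ≤ n - 1 := by
      rw [natDegree_le_iff_coeff_eq_zero]
      intro N hN
      rw [hcoeff]
      have hfe : F.filter (fun S => S.card = N) = ∅ := by
        rw [Finset.filter_eq_empty_iff]
        intro S hS hSN
        have hle : S.card ≤ n := Finset.card_le_univ S
        have hSu : S = Finset.univ := Finset.eq_univ_of_card S (by omega)
        exact hup (hSu ▸ hS)
      rw [hfe]; simp
    have hd2 : 2 ≤ P.natDegree := le_natDegree_of_ne_zero (by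
      rw [hc2]; exact_mod_cast (Nat.choose_pos (by omega : 2 ≤ n)).ne')
    set d := P.natDegree with hd
    set Pc := P.map (algebraMap ℝ ℂ) with hPcdef
    have hinj : Function.Injective (algebraMap ℝ ℂ) := (algebraMap ℝ ℂ).injective
    have hPcd : Pc.natDegree = d := natDegree_map_eq_of_injective hinj P
    have hPcc : ∀ k, Pc.coeff k = ((P.coeff k : ℝ) : ℂ) := fun k => coeff_map _ k
    have hPc0 : Pc.coeff 0 = 1 := by rw [hPcc, hc0]; norm_num
    have htr : Pc.natTrailingDegree = 0 :=
      natTrailingDegree_eq_zero.mpr (Or.inr (by rw [hPc0]; norm_num))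
    set Q := Pc.reverse with hQdef
    have hQd : Q.natDegree = d := by
      rw [hQdef, reverse_natDegree, htr, hPcd]
      omega
    have hQlead : Q.leadingCoeff = 1 := by
      rw [hQdef, reverse_leadingCoeff, trailingCoeff, htr, hPc0]
    have hQ0 : Q ≠ 0 := fun h => by simp [h] at hQlead
    have hroots : Multiset.card Q.roots = Q.natDegree :=
      splits_iff_card_roots.mp (IsAlgClosed.splits Q)
    set W := Q.roots with hWdef
    have him : ∀ w ∈ W, w.im = 0 := by
      intro w hw
      have hwroot : Q.eval w = 0 := ((mem_roots hQ0).mp hw)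
      have hw0 : w ≠ 0 := by
        intro h0
        rw [h0, ← coeff_zero_eq_eval_zero, hQdef, coeff_zero_reverse] at hwroot
        exact (leadingCoeff_ne_zero.mpr (fun hh => by simp [hh] at hPc0)) hwroot
      haveI : Invertible (w⁻¹) := invertibleOfNonzero (inv_ne_zero hw0)
      have hiff := eval₂_reverse_eq_zero_iff (RingHom.id ℂ) (w⁻¹) Pc
      rw [invOf_eq_inv, inv_inv] at hiff
      have hPcw : Polynomial.eval₂ (RingHom.id ℂ) w⁻¹ Pc = 0 := hiff.mp hwroot
      have haev : Polynomial.aeval (w⁻¹) P = 0 := by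
        rw [aeval_def, ← eval_map, ← hPcdef]
        exact hPcw
      have h2 : (w⁻¹).im = 0 := hroot _ haev
      rw [← inv_inv w, Complex.inv_im, h2]
      simp
    have hQc1 : Q.coeff (d-1) = ((n:ℝ):ℂ) := by
      rw [hQdef, coeff_reverse, hPcd, revAt_le (by omega : d - 1 ≤ d),
        show d - (d-1) = 1 by omega, hPcc, hc1]
    have hQc2 : Q.coeff (d-2) = (((n.choose 2 : ℕ):ℝ):ℂ) := by
      rw [hQdef, coeff_reverse, hPcd, revAt_le (by omega : d - 2 ≤ d),
        show d - (d-2) = 2 by omega, hPcc, hc2]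
    have hv1 := coeff_eq_esymm_roots_of_card hroots
      (show d - 1 ≤ Q.natDegree by omega)
    have hv2 := coeff_eq_esymm_roots_of_card hroots
      (show d - 2 ≤ Q.natDegree by omega)
    rw [hQd, show d - (d-1) = 1 by omega, hQc1, hQlead, ← hWdef, ms_esymm_one] at hv1
    rw [hQd, show d - (d-2) = 2 by omega, hQc2, hQlead, ← hWdef] at hv2
    set s := W.map Complex.re with hs
    have hWs : s.map (Complex.ofRealHom) = W := by
      rw [hs, Multiset.map_map]
      have hcg : W.map (Complex.ofRealHom ∘ Complex.re) = W.map id :=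
        Multiset.map_congr rfl fun w hw => Complex.ext (by simp) (by simp [him w hw])
      rw [hcg, Multiset.map_id]
    have hesymm : ∀ k, W.esymm k = ((s.esymm k : ℝ) : ℂ) := by
      intro k
      rw [← hWs, ms_esymm_map]
      rfl
    have hWsum : W.sum = ((s.sum : ℝ) : ℂ) := by
      rw [← ms_esymm_one, hesymm, ms_esymm_one]
    have hsum : s.sum = -(n:ℝ) := by
      apply Complex.ofReal_injective
      rw [hWsum] at hv1
      push_cast
      push_cast at hv1
      linear_combination hv1
    have hsym2 : s.esymm 2 = ((n.choose 2 : ℕ) : ℝ) := by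
      apply Complex.ofReal_injective
      rw [hesymm 2] at hv2
      push_cast
      push_cast at hv2
      linear_combination -hv2
    have hcard : Multiset.card s = d := by
      rw [hs, Multiset.card_map, hWdef, hroots, hQd]
    have hT : (s.map (fun x => x ^ 2)).sum = (n:ℝ) := by
      have hid := ms_sq_sum s
      rw [hsum, hsym2, Nat.cast_choose_two] at hid
      linear_combination -hid
    have final := ms_cauchy s
    rw [hsum, hT, hcard] at final
    have hnpos : (0:ℝ) < (n:ℝ) := by exact_mod_cast (by omega : 0 < n)
    have hnd : (n:ℝ) ≤ (d:ℝ) := by nlinarith [final]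
    have hndn : n ≤ d := by exact_mod_cast hnd
    omega
  · -- A G → real-rooted
    intro hGA z hz
    have hFuniv : F = Finset.univ := by
      rw [hF]
      apply Finset.filter_true_of_mem
      intro S _
      exact hA _ _ ⟨SimpleGraph.Embedding.induce (S : Set V)⟩ hGA
    rw [hP, hFuniv] at hz
    rw [map_sum] at hz
    simp only [map_pow, aeval_X] at hz
    have hsum : ∑ S : Finset V, z ^ S.card = (z + 1) ^ n := by
      calc ∑ S : Finset V, z ^ S.card
          = ∑ S ∈ (Finset.univ : Finset V).powerset,
              (∏ _i ∈ S, z) * ∏ _i ∈ Finset.univ \ S, (1:ℂ) := by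
            rw [Finset.powerset_univ]
            exact Finset.sum_congr rfl fun S _ => by simp [Finset.prod_const]
        _ = ∏ _i ∈ (Finset.univ : Finset V), (z + 1) := (Finset.prod_add _ _ _).symm
        _ = (z + 1) ^ n := by simp [Finset.prod_const, hn]
    rw [hsum] at hz
    have hz1 : z + 1 = 0 := by
      rcases Nat.eq_zero_or_pos n with h0 | h1
      · rw [h0] at hz; simp at hz
      · exact pow_eq_zero_iff (by omega) |>.mp hz
    have hz2 : z = -1 := by linear_combination hz1
    rw [hz2]
    simp
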